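/- arXiv:1910.08997 — 8 statements merged into one kernel-verified Lean document; each statement's English description precedes it below -/
import Mathlib

section
/- Fix an integer m ≥ 1, a probability measure G on (0,∞), and an integer y with 1 ≤ y ≤ m, and assume ∫ θ^{y+1}/(1+θ)^m dG(θ) < ∞ (this holds automatically when y < m). Then the function δ ↦ ∫ θ^{−1} (θ − δ)² C(m,y) θ^y/(1+θ)^m dG(θ) on ℝ attains its minimum at the unique point δ*(y) = [y/(m−y+1)] · p(y)/p(y−1). -/
open MeasureTheory

/-- Bayes estimator of the Binomial odds `θ = q/(1-q)` under the scaled squared error loss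
`ℓ⁽¹⁾(θ,δ) = θ⁻¹(θ-δ)²`: given `Y = y` with `1 ≤ y ≤ m` and the integrability condition
`∫ θ^{y+1}/(1+θ)^m dG < ∞`, the posterior expected loss `δ ↦ ∫ θ⁻¹(θ-δ)² p(y|θ) dG(θ)`
attains its minimum at the unique point `δ*(y) = [y/(m-y+1)] p(y)/p(y-1)`. -/
theorem bayes_rule_binomial_odds_scaled_loss
    (m : ℕ) (hm : 1 ≤ m)
    (G : Measure ℝ) [IsProbabilityMeasure G] (hG : G (Set.Iic 0) = 0)
    (y : ℕ) (hy1 : 1 ≤ y) (hym : y ≤ m)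
    (hfin : ∫⁻ θ, ENNReal.ofReal (θ ^ (y + 1) / (1 + θ) ^ m) ∂G < ⊤)
    (p : ℕ → ℝ)
    (hp : ∀ z : ℕ, p z = ∫ θ, (m.choose z : ℝ) * θ ^ z / (1 + θ) ^ m ∂G)
    (δstar : ℝ)
    (hδ : δstar = (y : ℝ) / ((m : ℝ) - (y : ℝ) + 1) * (p y / p (y - 1))) :
    (∀ δ : ℝ,
      (∫ θ, θ⁻¹ * (θ - δstar) ^ 2 * ((m.choose y : ℝ) * θ ^ y / (1 + θ) ^ m) ∂G)
        ≤ ∫ θ, θ⁻¹ * (θ - δ) ^ 2 * ((m.choose y : ℝ) * θ ^ y / (1 + θ) ^ m) ∂G) ∧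
    (∀ δ : ℝ,
      (∫ θ, θ⁻¹ * (θ - δ) ^ 2 * ((m.choose y : ℝ) * θ ^ y / (1 + θ) ^ m) ∂G)
        = (∫ θ, θ⁻¹ * (θ - δstar) ^ 2 * ((m.choose y : ℝ) * θ ^ y / (1 + θ) ^ m) ∂G)
      → δ = δstar) := by
  obtain ⟨n, rfl⟩ : ∃ n, y = n + 1 := ⟨y - 1, (Nat.succ_pred_eq_of_pos hy1).symm⟩
  simp only [Nat.add_sub_cancel] at hδ
  -- almost everywhere positivity
  have hae : ∀ᵐ θ ∂G, 0 < θ := by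
    have h1 : ∀ᵐ θ ∂G, θ ∉ Set.Iic 0 := by
      rw [ae_iff]
      convert hG using 2
      ext
      simp
    filter_upwards [h1] with θ h
    simpa using h
  have hmeas : ∀ k : ℕ, AEStronglyMeasurable (fun θ : ℝ => θ ^ k / (1 + θ) ^ m) G :=
    fun k => ((measurable_id.pow_const k).div
      ((measurable_const.add measurable_id).pow_const m)).aestronglyMeasurable
  have hnn : ∀ k : ℕ, 0 ≤ᵐ[G] fun θ : ℝ => θ ^ k / (1 + θ) ^ m := by
    intro k
    filter_upwards [hae] with θ hθ
    exact div_nonneg (pow_nonneg hθ.le _) (pow_nonneg (by linarith) _)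
  have hg : Integrable (fun θ : ℝ => θ ^ (n + 2) / (1 + θ) ^ m) G := by
    refine ⟨hmeas _, ?_⟩
    rw [hasFiniteIntegral_iff_ofReal (hnn _)]
    exact hfin
  have hint : ∀ k : ℕ, k ≤ n + 2 → Integrable (fun θ : ℝ => θ ^ k / (1 + θ) ^ m) G := by
    intro k hk
    refine ((integrable_const (1 : ℝ)).add hg).mono' (hmeas k) ?_
    filter_upwards [hae] with θ hθ
    have h1 : (0:ℝ) < 1 + θ := by linarith
    have hg0 : 0 ≤ θ ^ (n + 2) / (1 + θ) ^ m :=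
      div_nonneg (pow_nonneg hθ.le _) (pow_nonneg h1.le _)
    rw [Real.norm_eq_abs,
      abs_of_nonneg (div_nonneg (pow_nonneg hθ.le _) (pow_nonneg h1.le _))]
    simp only [Pi.add_apply]
    rcases le_total θ 1 with h | h
    · have hle : θ ^ k / (1 + θ) ^ m ≤ 1 := by
        rw [div_le_one (pow_pos h1 m)]
        calc θ ^ k ≤ 1 := pow_le_one₀ hθ.le h
          _ ≤ (1 + θ) ^ m := one_le_pow₀ (by linarith)
      linarith
    · have hle : θ ^ k / (1 + θ) ^ m ≤ θ ^ (n + 2) / (1 + θ) ^ m :=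
        (div_le_div_iff_of_pos_right (pow_pos h1 m)).mpr (pow_le_pow_right₀ h hk)
      linarith
  set C : ℝ := (m.choose (n + 1) : ℝ) with hCdef
  have hCpos : (0:ℝ) < C := by
    rw [hCdef]; exact_mod_cast Nat.choose_pos hym
  set A : ℝ := ∫ θ, θ ^ (n + 2) / (1 + θ) ^ m ∂G with hAdef
  set B : ℝ := ∫ θ, θ ^ (n + 1) / (1 + θ) ^ m ∂G with hBdef
  set D : ℝ := ∫ θ, θ ^ n / (1 + θ) ^ m ∂G with hDdef
  have key : ∀ δ : ℝ,
      (∫ θ, θ⁻¹ * (θ - δ) ^ 2 * (C * θ ^ (n + 1) / (1 + θ) ^ m) ∂G)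
        = C * (A - 2 * δ * B + δ ^ 2 * D) := by
    intro δ
    have h1 : (∫ θ, θ⁻¹ * (θ - δ) ^ 2 * (C * θ ^ (n + 1) / (1 + θ) ^ m) ∂G)
        = ∫ θ, C * (θ ^ (n + 2) / (1 + θ) ^ m - 2 * δ * (θ ^ (n + 1) / (1 + θ) ^ m)
            + δ ^ 2 * (θ ^ n / (1 + θ) ^ m)) ∂G := by
      refine integral_congr_ae ?_
      filter_upwards [hae] with θ hθ
      have hθ0 : θ ≠ 0 := ne_of_gt hθ
      have h1θ : (1 + θ) ≠ 0 := by positivity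
      field_simp
      ring
    have i2 : Integrable (fun θ : ℝ => 2 * δ * (θ ^ (n + 1) / (1 + θ) ^ m)) G :=
      (hint (n + 1) (by omega)).const_mul (2 * δ)
    have i3 : Integrable (fun θ : ℝ => δ ^ 2 * (θ ^ n / (1 + θ) ^ m)) G :=
      (hint n (by omega)).const_mul (δ ^ 2)
    have i1 : Integrable (fun θ : ℝ =>
        θ ^ (n + 2) / (1 + θ) ^ m - 2 * δ * (θ ^ (n + 1) / (1 + θ) ^ m)) G :=
      (hint (n + 2) le_rfl).sub i2
    rw [h1, integral_const_mul]
    congr 1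
    rw [integral_add i1 i3, integral_sub (hint (n + 2) le_rfl) i2,
      integral_const_mul, integral_const_mul]
  -- positivity of D
  have hIoi : G (Set.Ioi (0:ℝ)) = 1 := by
    have hc := measure_compl (measurableSet_Iic : MeasurableSet (Set.Iic (0:ℝ)))
      (measure_ne_top G _)
    rw [Set.compl_Iic, measure_univ, hG] at hc
    simpa using hc
  have hDpos : (0:ℝ) < D := by
    rw [hDdef, integral_pos_iff_support_of_nonneg_ae (hnn n) (hint n (by omega))]
    have hsub : Set.Ioi (0:ℝ) ⊆ Function.support (fun θ : ℝ => θ ^ n / (1 + θ) ^ m) := by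
      intro θ hθ
      have hθ' : (0:ℝ) < θ := hθ
      exact ne_of_gt (div_pos (pow_pos hθ' _) (pow_pos (by linarith) _))
    calc (0:ENNReal) < G (Set.Ioi 0) := by rw [hIoi]; norm_num
      _ ≤ _ := measure_mono hsub
  -- express p values
  have hpy : p (n + 1) = C * B := by
    rw [hp, hBdef]
    simp_rw [mul_div_assoc]
    exact integral_const_mul _ _
  have hcn : (0:ℝ) < (m.choose n : ℝ) := by exact_mod_cast Nat.choose_pos (by omega)
  have hpn : p n = (m.choose n : ℝ) * D := by
    rw [hp, hDdef]
    simp_rw [mul_div_assoc]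
    exact integral_const_mul _ _
  have hnm : ((n:ℝ) + 1) ≤ (m:ℝ) := by exact_mod_cast hym
  have hmy : (0:ℝ) < (m:ℝ) - ((n:ℝ) + 1) + 1 := by linarith
  have hch : ((n:ℝ) + 1) * C = ((m:ℝ) - ((n:ℝ) + 1) + 1) * (m.choose n : ℝ) := by
    have h := Nat.choose_succ_right_eq m n
    have hn : n ≤ m := by omega
    have h2 : ((m.choose (n + 1) * (n + 1) : ℕ) : ℝ) = ((m.choose n * (m - n) : ℕ) : ℝ) := by
      rw [h]
    rw [hCdef]
    push_cast [Nat.cast_sub hn] at h2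
    linear_combination h2
  have hδB : δstar = B / D := by
    rw [hδ, hpy, hpn]
    push_cast
    field_simp
    linear_combination B * hch
  have hBD : B = δstar * D := by rw [hδB]; field_simp
  have expand : ∀ δ : ℝ,
      (∫ θ, θ⁻¹ * (θ - δ) ^ 2 * (C * θ ^ (n + 1) / (1 + θ) ^ m) ∂G)
        = (∫ θ, θ⁻¹ * (θ - δstar) ^ 2 * (C * θ ^ (n + 1) / (1 + θ) ^ m) ∂G)
          + C * D * (δ - δstar) ^ 2 := by
    intro δ
    rw [key δ, key δstar]
    linear_combination (2 * C * (δstar - δ)) * hBD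
  constructor
  · intro δ
    rw [expand δ]
    nlinarith [sq_nonneg (δ - δstar), mul_pos hCpos hDpos]
  · intro δ hEq
    have h2 := expand δ
    rw [hEq] at h2
    have h3 : C * D * (δ - δstar) ^ 2 = 0 := by linarith
    have h4 : (δ - δstar) ^ 2 = 0 := by
      have := mul_pos hCpos hDpos
      by_contra hne
      have h5 : 0 < (δ - δstar) ^ 2 := lt_of_le_of_ne (sq_nonneg _) (Ne.symm hne)
      nlinarith
    have := pow_eq_zero_iff (two_ne_zero) |>.mp h4
    linarith [sub_eq_zero.mp this]
end

section
/- Let p be a pmf on ℕ with p(y) > 0 for all y, define h₀(0) = 1 and h₀(y) = 1 − p(y−1)/p(y) for y ≥ 1, and let h̃ : ℕ → ℝ be bounded. Fix λ > 0 and define κ_λ(u,v) = h̃(u)h̃(v)K_λ(u,v) + h̃(u)Δ_v K_λ(u,v) + h̃(v)Δ_u K_λ(u,v) + Δ_{u,v}K_λ(u,v). Then both double series below converge absolutely and Σ_{u=0}^∞ Σ_{v=0}^∞ p(u)p(v)(h̃(u)−h₀(u)) K_λ(u,v) (h̃(v)−h₀(v)) = Σ_{u=0}^∞ Σ_{v=0}^∞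 p(u)p(v) κ_λ(u,v). -/
/-- Shifted pmf: `qsh p 0 = 0`, `qsh p (y+1) = p y`. -/
def qsh (p : ℕ → ℝ) : ℕ → ℝ
  | 0 => 0
  | y + 1 => p y

lemma qsh_nonneg (p : ℕ → ℝ) (hp : ∀ y, 0 ≤ p y) : ∀ v, 0 ≤ qsh p v
  | 0 => le_refl 0
  | y + 1 => hp y

lemma qsh_summable (p : ℕ → ℝ) (hps : Summable p) : Summable (qsh p) := by
  refine (summable_nat_add_iff 1).mp ?_
  simpa [qsh] using hps

/-- The auxiliary kernel `g u v = h̃(v) K(u,v) + Δ_v K(u,v)`. -/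
def gker (htil : ℕ → ℝ) (K : ℕ → ℕ → ℝ) (u v : ℕ) : ℝ :=
  htil v * K u v + (K u (v + 1) - K u v)

/-- `F u = ∑_v p v * g u v`. -/
noncomputable def Fk (p htil : ℕ → ℝ) (K : ℕ → ℕ → ℝ) (u : ℕ) : ℝ :=
  ∑' v, p v * gker htil K u v

lemma spm_aux (p : ℕ → ℝ) (hps : Summable p) (hp0 : ∀ y, 0 ≤ p y)
    (f : ℕ → ℝ) (M : ℝ) (hf : ∀ v, |f v| ≤ M) :
    Summable fun v => p v * f v := by
  refine Summable.of_norm_bounded (hps.mul_right M) ?_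
  intro v
  rw [Real.norm_eq_abs, abs_mul, abs_of_nonneg (hp0 v)]
  exact mul_le_mul_of_nonneg_left (hf v) (hp0 v)

lemma sqm_aux (p : ℕ → ℝ) (hps : Summable p) (hp0 : ∀ y, 0 ≤ p y)
    (f : ℕ → ℝ) (M : ℝ) (hf : ∀ v, |f v| ≤ M) :
    Summable fun v => qsh p v * f v := by
  refine Summable.of_norm_bounded
    ((qsh_summable p hps).mul_right M) ?_
  intro v
  rw [Real.norm_eq_abs, abs_mul, abs_of_nonneg (qsh_nonneg p hp0 v)]
  exact mul_le_mul_of_nonneg_left (hf v) (qsh_nonneg p hp0 v)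

lemma ph_eq (p : ℕ → ℝ) (hp : ∀ y, 0 < p y) (h₀ : ℕ → ℝ)
    (hh₀0 : h₀ 0 = 1) (hh₀ : ∀ y : ℕ, h₀ (y + 1) = 1 - p y / p (y + 1)) :
    ∀ v, p v * h₀ v = p v - qsh p v := by
  intro v
  cases v with
  | zero => simp [hh₀0, qsh]
  | succ y =>
    have hne : p (y + 1) ≠ 0 := (hp (y + 1)).ne'
    rw [hh₀ y]
    field_simp [qsh]
    rfl

lemma sph_aux (p : ℕ → ℝ) (hp : ∀ y, 0 < p y) (hps : Summable p) (h₀ : ℕ → ℝ)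
    (hh₀0 : h₀ 0 = 1) (hh₀ : ∀ y : ℕ, h₀ (y + 1) = 1 - p y / p (y + 1))
    (f : ℕ → ℝ) (M : ℝ) (hf : ∀ v, |f v| ≤ M) :
    Summable fun v => p v * (h₀ v * f v) := by
  have hp0 : ∀ y, 0 ≤ p y := fun y => (hp y).le
  have : (fun v => p v * (h₀ v * f v)) = fun v => p v * f v - qsh p v * f v := by
    funext v
    rw [← mul_assoc, ph_eq p hp h₀ hh₀0 hh₀ v, sub_mul]
  rw [this]
  exact (spm_aux p hps hp0 f M hf).sub (sqm_aux p hps hp0 f M hf)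

lemma stein_aux (p : ℕ → ℝ) (hp : ∀ y, 0 < p y) (hps : Summable p) (h₀ : ℕ → ℝ)
    (hh₀0 : h₀ 0 = 1) (hh₀ : ∀ y : ℕ, h₀ (y + 1) = 1 - p y / p (y + 1))
    (f : ℕ → ℝ) (M : ℝ) (hf : ∀ v, |f v| ≤ M) :
    ∑' v, p v * (h₀ v * f v) = ∑' v, p v * (f v - f (v + 1)) := by
  have hp0 : ∀ y, 0 ≤ p y := fun y => (hp y).le
  have s1 : Summable fun v => p v * f v := spm_aux p hps hp0 f M hf
  have s1' : Summable fun v => p v * f (v + 1) :=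
    spm_aux p hps hp0 (fun v => f (v + 1)) M (fun v => hf (v + 1))
  have s2 : Summable fun v => qsh p v * f v := sqm_aux p hps hp0 f M hf
  have e0 : (fun v => p v * (h₀ v * f v)) = fun v => p v * f v - qsh p v * f v := by
    funext v
    rw [← mul_assoc, ph_eq p hp h₀ hh₀0 hh₀ v, sub_mul]
  have e1 : ∑' v, qsh p v * f v = ∑' v, p v * f (v + 1) := by
    rw [Summable.tsum_eq_zero_add s2]
    simp [qsh]
  calc ∑' v, p v * (h₀ v * f v) = ∑' v, (p v * f v - qsh p v * f v) := by rw [e0]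
    _ = (∑' v, p v * f v) - ∑' v, qsh p v * f v := Summable.tsum_sub s1 s2
    _ = (∑' v, p v * f v) - ∑' v, p v * f (v + 1) := by rw [e1]
    _ = ∑' v, (p v * f v - p v * f (v + 1)) := (Summable.tsum_sub s1 s1').symm
    _ = ∑' v, p v * (f v - f (v + 1)) := by
        congr 1; funext v; ring

/-- RKHS representation of the kernelized Stein discrepancy under the scaled loss (k = 1):
the Stein-discrepancy quadratic form equals the double expectation of the Stein kernel
`κ_λ`, both double series converging absolutely. -/
theorem ksd_rkhs_representation_scaled_loss
    (p : ℕ → ℝ) (hp : ∀ y, 0 < p y) (hp1 : ∑' y : ℕ, p y = 1)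
    (h₀ : ℕ → ℝ) (hh₀0 : h₀ 0 = 1) (hh₀ : ∀ y : ℕ, h₀ (y + 1) = 1 - p y / p (y + 1))
    (htil : ℕ → ℝ) (C : ℝ) (hbd : ∀ y, |htil y| ≤ C)
    (lam : ℝ) (hlam : 0 < lam)
    (K : ℕ → ℕ → ℝ)
    (hK : ∀ u v : ℕ, K u v = Real.exp (-((u : ℝ) - (v : ℝ)) ^ 2 / (2 * lam)))
    (κ : ℕ → ℕ → ℝ)
    (hκ : ∀ u v : ℕ, κ u v =
        htil u * htil v * K u v
        + htil u * (K u (v + 1) - K u v)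
        + htil v * (K (u + 1) v - K u v)
        + (K (u + 1) (v + 1) - K (u + 1) v - K u (v + 1) + K u v)) :
    (Summable fun uv : ℕ × ℕ =>
        |p uv.1 * p uv.2 * (htil uv.1 - h₀ uv.1) * K uv.1 uv.2 * (htil uv.2 - h₀ uv.2)|) ∧
    (Summable fun uv : ℕ × ℕ => |p uv.1 * p uv.2 * κ uv.1 uv.2|) ∧
    ∑' u : ℕ, ∑' v : ℕ, p u * p v * (htil u - h₀ u) * K u v * (htil v - h₀ v)
      = ∑' u : ℕ, ∑' v : ℕ, p u * p v * κ u v := by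
  have hp0 : ∀ y, 0 ≤ p y := fun y => (hp y).le
  have hps : Summable p := by
    by_contra h
    rw [tsum_eq_zero_of_not_summable h] at hp1
    norm_num at hp1
  have hC0 : 0 ≤ C := le_trans (abs_nonneg _) (hbd 0)
  have hKabs : ∀ u v, |K u v| ≤ 1 := by
    intro u v
    rw [hK, abs_of_pos (Real.exp_pos _), Real.exp_le_one_iff]
    apply div_nonpos_of_nonpos_of_nonneg
    · exact neg_nonpos_of_nonneg (sq_nonneg _)
    · linarith
  -- bound on g
  have hgb : ∀ u v, |gker htil K u v| ≤ C + 2 := by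
    intro u v
    have h1 := abs_add_le (htil v * K u v) (K u (v + 1) - K u v)
    have h2 : |htil v * K u v| ≤ C := by
      rw [abs_mul]
      calc |htil v| * |K u v| ≤ C * 1 :=
            mul_le_mul (hbd v) (hKabs u v) (abs_nonneg _) hC0
        _ = C := mul_one C
    have h3 : |K u (v + 1) - K u v| ≤ 2 := by
      calc |K u (v + 1) - K u v| ≤ |K u (v + 1)| + |K u v| := abs_sub _ _
        _ ≤ 1 + 1 := add_le_add (hKabs u (v + 1)) (hKabs u v)
        _ = 2 := by norm_num
    calc |gker htil K u v| ≤ |htil v * K u v| + |K u (v + 1) - K u v| := h1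
      _ ≤ C + 2 := add_le_add h2 h3
  have hκg : ∀ u v, κ u v = htil u * gker htil K u v
      + (gker htil K (u + 1) v - gker htil K u v) := by
    intro u v
    simp only [hκ, gker]; ring
  have hκb : ∀ u v, |κ u v| ≤ C * (C + 2) + 2 * (C + 2) := by
    intro u v
    rw [hκg]
    have h1 := abs_add_le (htil u * gker htil K u v)
      (gker htil K (u + 1) v - gker htil K u v)
    have h2 : |htil u * gker htil K u v| ≤ C * (C + 2) := by
      rw [abs_mul]
      exact mul_le_mul (hbd u) (hgb u v) (abs_nonneg _) hC0
    have h3 : |gker htil K (u + 1) v - gker htil K u v| ≤ 2 * (C + 2) := by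
      calc |gker htil K (u + 1) v - gker htil K u v|
          ≤ |gker htil K (u + 1) v| + |gker htil K u v| := abs_sub _ _
        _ ≤ (C + 2) + (C + 2) := add_le_add (hgb (u + 1) v) (hgb u v)
        _ = 2 * (C + 2) := by ring
    calc |htil u * gker htil K u v + (gker htil K (u + 1) v - gker htil K u v)|
        ≤ |htil u * gker htil K u v| + |gker htil K (u + 1) v - gker htil K u v| := h1
      _ ≤ C * (C + 2) + 2 * (C + 2) := add_le_add h2 h3
  -- summability of A u = p u * |htil u - h₀ u|
  have hA : Summable fun u => p u * |htil u - h₀ u| := by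
    refine Summable.of_nonneg_of_le (fun u => mul_nonneg (hp0 u) (abs_nonneg _)) ?_
      ((hps.mul_left C).add (hps.add (qsh_summable p hps)))
    intro u
    have h1 : |htil u - h₀ u| ≤ C + |h₀ u| := by
      calc |htil u - h₀ u| ≤ |htil u| + |h₀ u| := abs_sub _ _
        _ ≤ C + |h₀ u| := add_le_add (hbd u) le_rfl
    have h2 : p u * |h₀ u| ≤ p u + qsh p u := by
      have : p u * |h₀ u| = |p u - qsh p u| := by
        rw [← ph_eq p hp h₀ hh₀0 hh₀ u, abs_mul, abs_of_nonneg (hp0 u)]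
      rw [this]
      calc |p u - qsh p u| ≤ |p u| + |qsh p u| := abs_sub _ _
        _ = p u + qsh p u := by
            rw [abs_of_nonneg (hp0 u), abs_of_nonneg (qsh_nonneg p hp0 u)]
    have h3 : p u * |htil u - h₀ u| ≤ p u * (C + |h₀ u|) :=
      mul_le_mul_of_nonneg_left h1 (hp0 u)
    calc p u * |htil u - h₀ u| ≤ p u * C + p u * |h₀ u| := by
          rw [← mul_add]; exact h3
      _ ≤ C * p u + (p u + qsh p u) := by rw [mul_comm (p u) C]; linarith
  refine ⟨?_, ?_, ?_⟩
  · -- first summability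
    refine Summable.of_nonneg_of_le (fun _ => abs_nonneg _) ?_
      (hA.mul_of_nonneg hA (fun u => mul_nonneg (hp0 u) (abs_nonneg _)) (fun v => mul_nonneg (hp0 v) (abs_nonneg _)))
    rintro ⟨u, v⟩
    have : |p u * p v * (htil u - h₀ u) * K u v * (htil v - h₀ v)|
        = (p u * |htil u - h₀ u| * (p v * |htil v - h₀ v|)) * |K u v| := by
      rw [abs_mul, abs_mul, abs_mul, abs_mul, abs_of_nonneg (hp0 u),
        abs_of_nonneg (hp0 v)]
      ring
    rw [this]
    calc (p u * |htil u - h₀ u| * (p v * |htil v - h₀ v|)) * |K u v|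
        ≤ (p u * |htil u - h₀ u| * (p v * |htil v - h₀ v|)) * 1 :=
          mul_le_mul_of_nonneg_left (hKabs u v) (mul_nonneg (mul_nonneg (hp0 u) (abs_nonneg _)) (mul_nonneg (hp0 v) (abs_nonneg _)))
      _ = p u * |htil u - h₀ u| * (p v * |htil v - h₀ v|) := mul_one _
  · -- second summability
    set D : ℝ := C * (C + 2) + 2 * (C + 2) with hD
    have hD0 : 0 ≤ D := by positivity
    refine Summable.of_nonneg_of_le (fun _ => abs_nonneg _) ?_
      (hps.mul_of_nonneg (hps.mul_right D) hp0
        (fun v => mul_nonneg (hp0 v) hD0))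
    rintro ⟨u, v⟩
    have : |p u * p v * κ u v| = p u * (p v * |κ u v|) := by
      rw [abs_mul, abs_mul, abs_of_nonneg (hp0 u), abs_of_nonneg (hp0 v)]
      ring
    rw [this]
    exact mul_le_mul_of_nonneg_left
      (mul_le_mul_of_nonneg_left (hκb u v) (hp0 v)) (hp0 u)
  · -- the main identity
    have sg : ∀ u, Summable fun v => p v * gker htil K u v :=
      fun u => spm_aux p hps hp0 (gker htil K u) (C + 2) (hgb u)
    -- bound on F
    have hFb : ∀ u, |Fk p htil K u| ≤ C + 2 := by
      intro u
      have hsum : Summable fun v => ‖p v * gker htil K u v‖ := by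
        simpa [Real.norm_eq_abs, abs_mul, abs_of_nonneg (hp0 _)] using
          spm_aux p hps hp0 (fun v => |gker htil K u v|) (C + 2)
            (fun v => by rw [abs_abs]; exact hgb u v)
      calc |Fk p htil K u| ≤ ∑' v, ‖p v * gker htil K u v‖ := by
            rw [← Real.norm_eq_abs]
            exact norm_tsum_le_tsum_norm hsum
        _ ≤ ∑' v, p v * (C + 2) := by
            refine Summable.tsum_le_tsum ?_ hsum (hps.mul_right _)
            intro v
            rw [Real.norm_eq_abs, abs_mul, abs_of_nonneg (hp0 v)]
            exact mul_le_mul_of_nonneg_left (hgb u v) (hp0 v)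
        _ = C + 2 := by rw [tsum_mul_right, hp1, one_mul]
    -- inner sum identity
    have inner2 : ∀ u, ∑' v, p v * ((htil v - h₀ v) * K u v) = Fk p htil K u := by
      intro u
      have sK : Summable fun v => p v * (htil v * K u v) := by
        refine spm_aux p hps hp0 _ C ?_
        intro v
        rw [abs_mul]
        calc |htil v| * |K u v| ≤ C * 1 :=
            mul_le_mul (hbd v) (hKabs u v) (abs_nonneg _) hC0
          _ = C := mul_one C
      have sh : Summable fun v => p v * (h₀ v * K u v) :=
        sph_aux p hp hps h₀ hh₀0 hh₀ (fun v => K u v) 1 (fun v => hKabs u v)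
      have sKK : Summable fun v => p v * (K u v - K u (v + 1)) := by
        refine spm_aux p hps hp0 _ 2 ?_
        intro v
        calc |K u v - K u (v + 1)| ≤ |K u v| + |K u (v + 1)| := abs_sub _ _
          _ ≤ 1 + 1 := add_le_add (hKabs u v) (hKabs u (v + 1))
          _ = 2 := by norm_num
      calc ∑' v, p v * ((htil v - h₀ v) * K u v)
          = ∑' v, (p v * (htil v * K u v) - p v * (h₀ v * K u v)) := by
            congr 1; funext v; ring
        _ = (∑' v, p v * (htil v * K u v)) - ∑' v, p v * (h₀ v * K u v) :=
            Summable.tsum_sub sK sh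
        _ = (∑' v, p v * (htil v * K u v)) - ∑' v, p v * (K u v - K u (v + 1)) := by
            rw [stein_aux p hp hps h₀ hh₀0 hh₀ (fun v => K u v) 1 (fun v => hKabs u v)]
        _ = ∑' v, (p v * (htil v * K u v) - p v * (K u v - K u (v + 1))) :=
            (Summable.tsum_sub sK sKK).symm
        _ = Fk p htil K u := by
            rw [Fk]; congr 1; funext v; rw [gker]; ring
    -- per-u key identity
    have key : ∀ u, htil u * Fk p htil K u + (Fk p htil K (u + 1) - Fk p htil K u)
        = ∑' v, p v * κ u v := by
      intro u
      have sA : Summable fun v => p v * (htil u * gker htil K u v) := by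
        refine spm_aux p hps hp0 _ (C * (C + 2)) ?_
        intro v
        rw [abs_mul]
        exact mul_le_mul (hbd u) (hgb u v) (abs_nonneg _) hC0
      have sB : Summable fun v =>
          p v * gker htil K (u + 1) v - p v * gker htil K u v :=
        (sg (u + 1)).sub (sg u)
      have e1 : htil u * Fk p htil K u
          = ∑' v, p v * (htil u * gker htil K u v) := by
        rw [Fk, ← tsum_mul_left]
        congr 1; funext v; ring
      have e2 : Fk p htil K (u + 1) - Fk p htil K u
          = ∑' v, (p v * gker htil K (u + 1) v - p v * gker htil K u v) := by
        rw [Fk, Fk]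
        exact (Summable.tsum_sub (sg (u + 1)) (sg u)).symm
      rw [e1, e2, ← Summable.tsum_add sA sB]
      congr 1; funext v
      rw [hκg]; ring
    -- assemble
    have sF1 : Summable fun u => p u * (htil u * Fk p htil K u) := by
      refine spm_aux p hps hp0 _ (C * (C + 2)) ?_
      intro u
      rw [abs_mul]
      exact mul_le_mul (hbd u) (hFb u) (abs_nonneg _) hC0
    have sF2 : Summable fun u => p u * (h₀ u * Fk p htil K u) :=
      sph_aux p hp hps h₀ hh₀0 hh₀ _ (C + 2) hFb
    have sF3 : Summable fun u => p u * (Fk p htil K u - Fk p htil K (u + 1)) := by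
      refine spm_aux p hps hp0 _ (2 * (C + 2)) ?_
      intro u
      calc |Fk p htil K u - Fk p htil K (u + 1)|
          ≤ |Fk p htil K u| + |Fk p htil K (u + 1)| := abs_sub _ _
        _ ≤ (C + 2) + (C + 2) := add_le_add (hFb u) (hFb (u + 1))
        _ = 2 * (C + 2) := by ring
    calc ∑' u, ∑' v, p u * p v * (htil u - h₀ u) * K u v * (htil v - h₀ v)
        = ∑' u, p u * (htil u - h₀ u) * ∑' v, p v * ((htil v - h₀ v) * K u v) := by
          congr 1; funext u
          rw [← tsum_mul_left]
          congr 1; funext v; ring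
      _ = ∑' u, (p u * (htil u * Fk p htil K u) - p u * (h₀ u * Fk p htil K u)) := by
          congr 1; funext u
          rw [inner2 u]; ring
      _ = (∑' u, p u * (htil u * Fk p htil K u))
          - ∑' u, p u * (h₀ u * Fk p htil K u) := Summable.tsum_sub sF1 sF2
      _ = (∑' u, p u * (htil u * Fk p htil K u))
          - ∑' u, p u * (Fk p htil K u - Fk p htil K (u + 1)) := by
          rw [stein_aux p hp hps h₀ hh₀0 hh₀ _ (C + 2) hFb]
      _ = ∑' u, (p u * (htil u * Fk p htil K u)
          - p u * (Fk p htil K u - Fk p htil K (u + 1))) :=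
          (Summable.tsum_sub sF1 sF3).symm
      _ = ∑' u, p u * (htil u * Fk p htil K u
          + (Fk p htil K (u + 1) - Fk p htil K u)) := by
          congr 1; funext u; ring
      _ = ∑' u, p u * ∑' v, p v * κ u v := by
          congr 1; funext u; rw [key u]
      _ = ∑' u, ∑' v, p u * p v * κ u v := by
          congr 1; funext u
          rw [← tsum_mul_left]
          congr 1; funext v; ring
end

section
/- Let p be a pmf on ℕ with p(y) > 0 for all y and finite mean Σ_y y·p(y) < ∞, define h₀(y) = (y+1)p(y+1)/p(y) − y for y ∈ ℕ, and let h̃ : ℕ → ℝ satisfy Σ_y p(y)|h̃(y)| < ∞. Fix λ > 0 and define κ_λ(u,v) = h̃(u)h̃(v)K_λ(u,v) + h̃(u)·v·Δ_v K_λ(u+1,v) + h̃(v)·u·Δ_u K_λ(u,v+1) + u·v·Δ_{u,v}K_λ(u,v). Then both double series below converge absolutely and Σ_{u=0}^∞ Σ_{v=0}^∞ p(u)p(v)(h̃(u)−h₀(u)) K_λ(u+1,v+1) (h̃(v)−h₀(v)) = Σ_{u=0}^∞ Σ_{v=0}^∞ p(u)p(v) κ_λ(u,v). -/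
lemma ksd_ibp (p : ℕ → ℝ) (hp : ∀ y, 0 < p y)
    (hmean : Summable fun y : ℕ => (y : ℝ) * p y)
    (htil : ℕ → ℝ) (hint : Summable fun y : ℕ => p y * |htil y|)
    (f : ℕ → ℝ) (C : ℝ) (hf : ∀ u, |f u| ≤ C) :
    ∑' u : ℕ, (p u * htil u - (((u:ℝ)+1) * p (u+1) - (u:ℝ) * p u)) * f u
      = ∑' u : ℕ, p u * (htil u * f u + (u:ℝ) * (f u - f (u-1))) := by
  have hshift : Summable fun u : ℕ => ((u:ℝ)+1) * p (u+1) := by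
    have h := hmean.comp_injective Nat.succ_injective
    have e : ((fun y : ℕ => (y:ℝ) * p y) ∘ Nat.succ) = fun u : ℕ => ((u:ℝ)+1) * p (u+1) := by
      funext u; push_cast [Function.comp, Nat.succ_eq_add_one]; ring
    rwa [e] at h
  have habs : ∀ (g c : ℕ → ℝ), (∀ u, 0 ≤ c u) → Summable c → (∀ u, |g u| ≤ c u * C) →
      Summable g := by
    intro g c hc hsc hb
    refine Summable.of_abs (Summable.of_nonneg_of_le (fun u => abs_nonneg _) hb ?_)
    exact hsc.mul_right C
  have S1 : Summable fun u : ℕ => p u * htil u * f u := by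
    refine habs _ (fun u => p u * |htil u|) (fun u => mul_nonneg (hp u).le (abs_nonneg _)) hint ?_
    intro u
    rw [abs_mul, abs_mul, abs_of_pos (hp u)]
    exact mul_le_mul_of_nonneg_left (hf u) (mul_nonneg (hp u).le (abs_nonneg _))
  have S2 : Summable fun u : ℕ => ((u:ℝ)+1) * p (u+1) * f u := by
    refine habs _ (fun u => ((u:ℝ)+1) * p (u+1))
      (fun u => mul_nonneg (by positivity) (hp _).le) hshift ?_
    intro u
    rw [abs_mul, abs_of_nonneg (mul_nonneg (by positivity) (hp _).le : (0:ℝ) ≤ ((u:ℝ)+1) * p (u+1))]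
    exact mul_le_mul_of_nonneg_left (hf u) (mul_nonneg (by positivity) (hp _).le)
  have S3 : Summable fun u : ℕ => (u:ℝ) * p u * f u := by
    refine habs _ (fun u => (u:ℝ) * p u)
      (fun u => mul_nonneg (by positivity) (hp _).le) hmean ?_
    intro u
    rw [abs_mul, abs_of_nonneg (mul_nonneg (by positivity) (hp _).le : (0:ℝ) ≤ (u:ℝ) * p u)]
    exact mul_le_mul_of_nonneg_left (hf u) (mul_nonneg (by positivity) (hp _).le)
  have Sg : Summable fun u : ℕ => (u:ℝ) * p u * f (u-1) := by
    refine habs _ (fun u => (u:ℝ) * p u)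
      (fun u => mul_nonneg (by positivity) (hp _).le) hmean ?_
    intro u
    rw [abs_mul, abs_of_nonneg (mul_nonneg (by positivity) (hp _).le : (0:ℝ) ≤ (u:ℝ) * p u)]
    exact mul_le_mul_of_nonneg_left (hf _) (mul_nonneg (by positivity) (hp _).le)
  have hswap : ∑' u : ℕ, ((u:ℝ)+1) * p (u+1) * f u = ∑' u : ℕ, (u:ℝ) * p u * f (u-1) := by
    rw [Summable.tsum_eq_zero_add Sg]
    simp only [Nat.cast_zero, zero_mul, zero_add, Nat.add_sub_cancel]
    exact tsum_congr fun u => by push_cast; ring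
  have e1 : ∀ u : ℕ, (p u * htil u - (((u:ℝ)+1) * p (u+1) - (u:ℝ) * p u)) * f u
      = p u * htil u * f u - ((u:ℝ)+1) * p (u+1) * f u + (u:ℝ) * p u * f u := by
    intro u; ring
  have e2 : ∀ u : ℕ, p u * (htil u * f u + (u:ℝ) * (f u - f (u-1)))
      = p u * htil u * f u - (u:ℝ) * p u * f (u-1) + (u:ℝ) * p u * f u := by
    intro u; ring
  calc ∑' u : ℕ, (p u * htil u - (((u:ℝ)+1) * p (u+1) - (u:ℝ) * p u)) * f u
      = ∑' u : ℕ, (p u * htil u * f u - ((u:ℝ)+1) * p (u+1) * f u + (u:ℝ) * p u * f u) :=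
        tsum_congr e1
    _ = (∑' u : ℕ, (p u * htil u * f u - ((u:ℝ)+1) * p (u+1) * f u)) + ∑' u : ℕ, (u:ℝ) * p u * f u :=
        Summable.tsum_add (S1.sub S2) S3
    _ = ((∑' u : ℕ, p u * htil u * f u) - ∑' u : ℕ, ((u:ℝ)+1) * p (u+1) * f u) + ∑' u : ℕ, (u:ℝ) * p u * f u := by
        rw [Summable.tsum_sub S1 S2]
    _ = ((∑' u : ℕ, p u * htil u * f u) - ∑' u : ℕ, (u:ℝ) * p u * f (u-1)) + ∑' u : ℕ, (u:ℝ) * p u * f u := by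
        rw [hswap]
    _ = ∑' u : ℕ, (p u * htil u * f u - (u:ℝ) * p u * f (u-1) + (u:ℝ) * p u * f u) := by
        rw [Summable.tsum_add (S1.sub Sg) S3, Summable.tsum_sub S1 Sg]
    _ = ∑' u : ℕ, p u * (htil u * f u + (u:ℝ) * (f u - f (u-1))) := tsum_congr fun u => (e2 u).symm

/-- RKHS representation of the kernelized Stein discrepancy under the regular squared
error loss (k = 0): the Stein-discrepancy quadratic form (with kernel `K_λ(u+1,v+1)`)
equals the double expectation of the Stein kernel `κ_λ`, both double series converging
absolutely. -/
theorem ksd_rkhs_representation_squared_loss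
    (p : ℕ → ℝ) (hp : ∀ y, 0 < p y) (hp1 : ∑' y : ℕ, p y = 1)
    (hmean : Summable fun y : ℕ => (y : ℝ) * p y)
    (h₀ : ℕ → ℝ) (hh₀ : ∀ y : ℕ, h₀ y = ((y : ℝ) + 1) * p (y + 1) / p y - (y : ℝ))
    (htil : ℕ → ℝ) (hint : Summable fun y : ℕ => p y * |htil y|)
    (lam : ℝ) (hlam : 0 < lam)
    (K : ℕ → ℕ → ℝ)
    (hK : ∀ u v : ℕ, K u v = Real.exp (-((u : ℝ) - (v : ℝ)) ^ 2 / (2 * lam)))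
    (κ : ℕ → ℕ → ℝ)
    (hκ : ∀ u v : ℕ, κ u v =
        htil u * htil v * K u v
        + htil u * (v : ℝ) * (K (u + 1) (v + 1) - K (u + 1) v)
        + htil v * (u : ℝ) * (K (u + 1) (v + 1) - K u (v + 1))
        + (u : ℝ) * (v : ℝ) * (K (u + 1) (v + 1) - K (u + 1) v - K u (v + 1) + K u v)) :
    (Summable fun uv : ℕ × ℕ =>
        |p uv.1 * p uv.2 * (htil uv.1 - h₀ uv.1) * K (uv.1 + 1) (uv.2 + 1)
          * (htil uv.2 - h₀ uv.2)|) ∧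
    (Summable fun uv : ℕ × ℕ => |p uv.1 * p uv.2 * κ uv.1 uv.2|) ∧
    ∑' u : ℕ, ∑' v : ℕ, p u * p v * (htil u - h₀ u) * K (u + 1) (v + 1) * (htil v - h₀ v)
      = ∑' u : ℕ, ∑' v : ℕ, p u * p v * κ u v := by
  -- basic facts about the kernel
  have hK1 : ∀ x y : ℕ, |K x y| ≤ 1 := by
    intro x y
    rw [hK, abs_of_pos (Real.exp_pos _)]
    apply Real.exp_le_one_iff.mpr
    apply div_nonpos_of_nonpos_of_nonneg (neg_nonpos.mpr (sq_nonneg _))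
    positivity
  have hKt : ∀ x y : ℕ, K (x+1) (y+1) = K x y := by
    intro x y; rw [hK, hK]; push_cast; ring_nf
  have hKd2 : ∀ a b c d : ℕ, |K a b - K c d| ≤ 2 := by
    intro a b c d
    calc |K a b - K c d| ≤ |K a b| + |K c d| := abs_sub _ _
      _ ≤ 2 := by linarith [hK1 a b, hK1 c d]
  have hKd4 : ∀ x y : ℕ,
      |K (x+1) (y+1) - K (x+1) y - K x (y+1) + K x y| ≤ 4 := by
    intro x y
    have h1 : |K (x+1) (y+1) - K (x+1) y - K x (y+1) + K x y|
        ≤ |K (x+1) (y+1) - K (x+1) y| + |K x y - K x (y+1)| := by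
      have h := abs_add_le (K (x+1) (y+1) - K (x+1) y) (K x y - K x (y+1))
      have e : K (x+1) (y+1) - K (x+1) y - K x (y+1) + K x y
          = (K (x+1) (y+1) - K (x+1) y) + (K x y - K x (y+1)) := by ring
      rw [e]; exact h
    linarith [hKd2 (x+1) (y+1) (x+1) y, hKd2 x y x (y+1)]
  -- shifted-mean summability
  have hshift : Summable fun u : ℕ => ((u:ℝ)+1) * p (u+1) := by
    have h := hmean.comp_injective Nat.succ_injective
    have e : ((fun y : ℕ => (y:ℝ) * p y) ∘ Nat.succ) = fun u : ℕ => ((u:ℝ)+1) * p (u+1) := by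
      funext u; push_cast [Function.comp, Nat.succ_eq_add_one]; ring
    rwa [e] at h
  -- the Stein-residual weight and its ℓ¹ bound
  have ha : ∀ u : ℕ, p u * (htil u - h₀ u)
      = p u * htil u - (((u:ℝ)+1) * p (u+1) - (u:ℝ) * p u) := by
    intro u
    rw [hh₀]
    field_simp [(hp u).ne']
  have hAsum : Summable fun u : ℕ => p u * |htil u| + (((u:ℝ)+1) * p (u+1) + (u:ℝ) * p u) :=
    hint.add (hshift.add hmean)
  have hAnn : ∀ u : ℕ, 0 ≤ p u * |htil u| + (((u:ℝ)+1) * p (u+1) + (u:ℝ) * p u) := by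
    intro u
    have h1 : (0:ℝ) ≤ p u * |htil u| := mul_nonneg (hp u).le (abs_nonneg _)
    have h2 : (0:ℝ) ≤ ((u:ℝ)+1) * p (u+1) := mul_nonneg (by positivity) (hp _).le
    have h3 : (0:ℝ) ≤ (u:ℝ) * p u := mul_nonneg (by positivity) (hp _).le
    linarith
  have haA : ∀ u : ℕ, |p u * (htil u - h₀ u)|
      ≤ p u * |htil u| + (((u:ℝ)+1) * p (u+1) + (u:ℝ) * p u) := by
    intro u
    rw [ha]
    have h1 : |p u * htil u - (((u:ℝ)+1) * p (u+1) - (u:ℝ) * p u)|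
        ≤ |p u * htil u| + |((u:ℝ)+1) * p (u+1) - (u:ℝ) * p u| := abs_sub _ _
    have h2 : |((u:ℝ)+1) * p (u+1) - (u:ℝ) * p u|
        ≤ |((u:ℝ)+1) * p (u+1)| + |(u:ℝ) * p u| := abs_sub _ _
    rw [abs_mul, abs_of_pos (hp u)] at h1
    rw [abs_of_nonneg (mul_nonneg (by positivity) (hp _).le : (0:ℝ) ≤ ((u:ℝ)+1) * p (u+1)),
        abs_of_nonneg (mul_nonneg (by positivity) (hp _).le : (0:ℝ) ≤ (u:ℝ) * p u)] at h2
    linarith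
  -- First conjunct
  have conj1 : Summable fun uv : ℕ × ℕ =>
      |p uv.1 * p uv.2 * (htil uv.1 - h₀ uv.1) * K (uv.1 + 1) (uv.2 + 1)
        * (htil uv.2 - h₀ uv.2)| := by
    refine Summable.of_nonneg_of_le (fun uv => abs_nonneg _) ?_
      (hAsum.mul_of_nonneg hAsum hAnn hAnn)
    rintro ⟨u, v⟩
    have e : p u * p v * (htil u - h₀ u) * K (u + 1) (v + 1) * (htil v - h₀ v)
        = (p u * (htil u - h₀ u)) * (p v * (htil v - h₀ v)) * K (u + 1) (v + 1) := by ring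
    rw [e, abs_mul, abs_mul]
    calc |p u * (htil u - h₀ u)| * |p v * (htil v - h₀ v)| * |K (u + 1) (v + 1)|
        ≤ |p u * (htil u - h₀ u)| * |p v * (htil v - h₀ v)| * 1 :=
          mul_le_mul_of_nonneg_left (hK1 _ _) (mul_nonneg (abs_nonneg _) (abs_nonneg _))
      _ = |p u * (htil u - h₀ u)| * |p v * (htil v - h₀ v)| := mul_one _
      _ ≤ _ := mul_le_mul (haA u) (haA v) (abs_nonneg _) (hAnn u)
  -- Second conjunct
  have hBsum : Summable fun u : ℕ => p u * (|htil u| + 2 * (u:ℝ)) := by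
    have h : Summable fun u : ℕ => p u * |htil u| + 2 * ((u:ℝ) * p u) :=
      hint.add (hmean.mul_left 2)
    exact h.congr fun u => by ring
  have hBnn : ∀ u : ℕ, 0 ≤ p u * (|htil u| + 2 * (u:ℝ)) := by
    intro u
    have h : (0:ℝ) ≤ |htil u| + 2 * (u:ℝ) := by positivity
    exact mul_nonneg (hp u).le h
  have hκb : ∀ u v : ℕ, |κ u v| ≤ (|htil u| + 2 * (u:ℝ)) * (|htil v| + 2 * (v:ℝ)) := by
    intro u v
    rw [hκ]
    have b1 : |htil u * htil v * K u v| ≤ |htil u| * |htil v| := by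
      rw [abs_mul, abs_mul]
      calc |htil u| * |htil v| * |K u v| ≤ |htil u| * |htil v| * 1 :=
            mul_le_mul_of_nonneg_left (hK1 _ _) (mul_nonneg (abs_nonneg _) (abs_nonneg _))
        _ = _ := mul_one _
    have b2 : |htil u * (v:ℝ) * (K (u+1) (v+1) - K (u+1) v)| ≤ |htil u| * (v:ℝ) * 2 := by
      rw [abs_mul, abs_mul, abs_of_nonneg (Nat.cast_nonneg v : (0:ℝ) ≤ (v:ℝ))]
      exact mul_le_mul_of_nonneg_left (hKd2 _ _ _ _)
        (mul_nonneg (abs_nonneg _) (Nat.cast_nonneg v))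
    have b3 : |htil v * (u:ℝ) * (K (u+1) (v+1) - K u (v+1))| ≤ |htil v| * (u:ℝ) * 2 := by
      rw [abs_mul, abs_mul, abs_of_nonneg (Nat.cast_nonneg u : (0:ℝ) ≤ (u:ℝ))]
      exact mul_le_mul_of_nonneg_left (hKd2 _ _ _ _)
        (mul_nonneg (abs_nonneg _) (Nat.cast_nonneg u))
    have b4 : |(u:ℝ) * (v:ℝ) * (K (u+1) (v+1) - K (u+1) v - K u (v+1) + K u v)|
        ≤ (u:ℝ) * (v:ℝ) * 4 := by
      rw [abs_mul, abs_mul, abs_of_nonneg (Nat.cast_nonneg u : (0:ℝ) ≤ (u:ℝ)),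
        abs_of_nonneg (Nat.cast_nonneg v : (0:ℝ) ≤ (v:ℝ))]
      exact mul_le_mul_of_nonneg_left (hKd4 _ _)
        (mul_nonneg (Nat.cast_nonneg u) (Nat.cast_nonneg v))
    have tri : |htil u * htil v * K u v
        + htil u * (v:ℝ) * (K (u+1) (v+1) - K (u+1) v)
        + htil v * (u:ℝ) * (K (u+1) (v+1) - K u (v+1))
        + (u:ℝ) * (v:ℝ) * (K (u+1) (v+1) - K (u+1) v - K u (v+1) + K u v)|
        ≤ |htil u * htil v * K u v|
        + |htil u * (v:ℝ) * (K (u+1) (v+1) - K (u+1) v)|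
        + |htil v * (u:ℝ) * (K (u+1) (v+1) - K u (v+1))|
        + |(u:ℝ) * (v:ℝ) * (K (u+1) (v+1) - K (u+1) v - K u (v+1) + K u v)| := by
      have h1 := abs_add_le (htil u * htil v * K u v
        + htil u * (v:ℝ) * (K (u+1) (v+1) - K (u+1) v)
        + htil v * (u:ℝ) * (K (u+1) (v+1) - K u (v+1)))
        ((u:ℝ) * (v:ℝ) * (K (u+1) (v+1) - K (u+1) v - K u (v+1) + K u v))
      have h2 := abs_add_le (htil u * htil v * K u v
        + htil u * (v:ℝ) * (K (u+1) (v+1) - K (u+1) v))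
        (htil v * (u:ℝ) * (K (u+1) (v+1) - K u (v+1)))
      have h3 := abs_add_le (htil u * htil v * K u v)
        (htil u * (v:ℝ) * (K (u+1) (v+1) - K (u+1) v))
      linarith
    have expand : (|htil u| + 2 * (u:ℝ)) * (|htil v| + 2 * (v:ℝ))
        = |htil u| * |htil v| + |htil u| * (v:ℝ) * 2 + |htil v| * (u:ℝ) * 2 + (u:ℝ) * (v:ℝ) * 4 := by
      ring
    rw [expand]
    linarith
  have conj2 : Summable fun uv : ℕ × ℕ => |p uv.1 * p uv.2 * κ uv.1 uv.2| := by
    refine Summable.of_nonneg_of_le (fun uv => abs_nonneg _) ?_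
      (hBsum.mul_of_nonneg hBsum hBnn hBnn)
    rintro ⟨u, v⟩
    rw [abs_mul, abs_mul, abs_of_pos (hp u), abs_of_pos (hp v)]
    calc p u * p v * |κ u v| ≤ p u * p v * ((|htil u| + 2 * (u:ℝ)) * (|htil v| + 2 * (v:ℝ))) :=
          mul_le_mul_of_nonneg_left (hκb u v) (mul_nonneg (hp u).le (hp v).le)
      _ = (p u * (|htil u| + 2 * (u:ℝ))) * (p v * (|htil v| + 2 * (v:ℝ))) := by ring
  refine ⟨conj1, conj2, ?_⟩
  -- the equality of the double sums
  set T : ℕ → ℕ → ℝ := fun u v =>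
    p v * (htil v * K (u+1) (v+1) + (v:ℝ) * (K (u+1) (v+1) - K (u+1) v)) with hT
  have hTb : ∀ u v : ℕ, |T u v| ≤ p v * (|htil v| + 2 * (v:ℝ)) := by
    intro u v
    rw [hT]
    simp only
    rw [abs_mul, abs_of_pos (hp v)]
    refine mul_le_mul_of_nonneg_left ?_ (hp v).le
    have h1 : |htil v * K (u+1) (v+1) + (v:ℝ) * (K (u+1) (v+1) - K (u+1) v)|
        ≤ |htil v * K (u+1) (v+1)| + |(v:ℝ) * (K (u+1) (v+1) - K (u+1) v)| := abs_add_le _ _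
    have h2 : |htil v * K (u+1) (v+1)| ≤ |htil v| := by
      rw [abs_mul]
      calc |htil v| * |K (u+1) (v+1)| ≤ |htil v| * 1 :=
            mul_le_mul_of_nonneg_left (hK1 _ _) (abs_nonneg _)
        _ = _ := mul_one _
    have h3 : |(v:ℝ) * (K (u+1) (v+1) - K (u+1) v)| ≤ (v:ℝ) * 2 := by
      rw [abs_mul, abs_of_nonneg (Nat.cast_nonneg v : (0:ℝ) ≤ (v:ℝ))]
      exact mul_le_mul_of_nonneg_left (hKd2 _ _ _ _) (Nat.cast_nonneg v)
    linarith
  have hTsum : ∀ u : ℕ, Summable fun v : ℕ => T u v := fun u =>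
    Summable.of_abs (Summable.of_nonneg_of_le (fun v => abs_nonneg _) (hTb u) hBsum)
  set S : ℕ → ℝ := fun u => ∑' v : ℕ, T u v with hS
  have hSb : ∀ u : ℕ, |S u| ≤ ∑' v : ℕ, p v * (|htil v| + 2 * (v:ℝ)) := by
    intro u
    have h1 : |S u| ≤ ∑' v : ℕ, |T u v| := by
      rw [hS]
      simpa [Real.norm_eq_abs] using norm_tsum_le_tsum_norm
        (f := fun v => T u v) (by simpa [Real.norm_eq_abs] using (hTsum u).abs)
    exact h1.trans (Summable.tsum_le_tsum (hTb u) (hTsum u).abs hBsum)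
  -- inner sum identity
  have hinner : ∀ u : ℕ,
      (∑' v : ℕ, p u * p v * (htil u - h₀ u) * K (u + 1) (v + 1) * (htil v - h₀ v))
        = (p u * (htil u - h₀ u)) * S u := by
    intro u
    have hfb : ∀ v : ℕ, |(p u * (htil u - h₀ u)) * K (u+1) (v+1)| ≤ |p u * (htil u - h₀ u)| := by
      intro v
      rw [abs_mul]
      calc |p u * (htil u - h₀ u)| * |K (u+1) (v+1)|
          ≤ |p u * (htil u - h₀ u)| * 1 := mul_le_mul_of_nonneg_left (hK1 _ _) (abs_nonneg _)
        _ = _ := mul_one _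
    have key := ksd_ibp p hp hmean htil hint
      (fun v => (p u * (htil u - h₀ u)) * K (u+1) (v+1)) |p u * (htil u - h₀ u)| hfb
    have l1 : (∑' v : ℕ, p u * p v * (htil u - h₀ u) * K (u + 1) (v + 1) * (htil v - h₀ v))
        = ∑' v : ℕ, (p v * htil v - (((v:ℝ)+1) * p (v+1) - (v:ℝ) * p v))
            * ((p u * (htil u - h₀ u)) * K (u+1) (v+1)) := by
      refine tsum_congr fun v => ?_
      rw [← ha v]
      ring
    have l2 : (∑' v : ℕ, p v * (htil v * ((p u * (htil u - h₀ u)) * K (u+1) (v+1))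
        + (v:ℝ) * ((p u * (htil u - h₀ u)) * K (u+1) (v+1)
          - (p u * (htil u - h₀ u)) * K (u+1) ((v-1)+1))))
        = ∑' v : ℕ, (p u * (htil u - h₀ u)) * T u v := by
      refine tsum_congr fun v => ?_
      rw [hT]
      match v with
      | 0 => push_cast; ring
      | Nat.succ n =>
        simp only [Nat.succ_eq_add_one, Nat.add_sub_cancel]
        push_cast
        ring
    rw [l1, key, l2, tsum_mul_left]
  -- outer sum identity
  have hSbound := hSb
  have houter : (∑' u : ℕ, (p u * (htil u - h₀ u)) * S u)
      = ∑' u : ℕ, p u * (htil u * S u + (u:ℝ) * (S u - S (u-1))) := by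
    have key := ksd_ibp p hp hmean htil hint S (∑' v : ℕ, p v * (|htil v| + 2 * (v:ℝ))) hSb
    rw [← key]
    exact tsum_congr fun u => by rw [← ha u]
  -- identify the outer summand with the κ-sum
  have hfinal : ∀ u : ℕ, p u * (htil u * S u + (u:ℝ) * (S u - S (u-1)))
      = ∑' v : ℕ, p u * p v * κ u v := by
    intro u
    have hsub : Summable fun v : ℕ => T u v - T (u-1) v := (hTsum u).sub (hTsum (u-1))
    have h1 : htil u * S u = ∑' v : ℕ, htil u * T u v := by
      rw [hS]; exact (tsum_mul_left).symm
    have h2 : (u:ℝ) * (S u - S (u-1)) = ∑' v : ℕ, (u:ℝ) * (T u v - T (u-1) v) := by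
      rw [hS]
      simp only
      rw [← Summable.tsum_sub (hTsum u) (hTsum (u-1)), tsum_mul_left]
    have hs1 : Summable fun v : ℕ => htil u * T u v := (hTsum u).mul_left _
    have hs2 : Summable fun v : ℕ => (u:ℝ) * (T u v - T (u-1) v) := hsub.mul_left _
    rw [h1, h2, ← Summable.tsum_add hs1 hs2, ← tsum_mul_left]
    refine tsum_congr fun v => ?_
    rw [hκ, hT]
    match u with
    | 0 =>
      push_cast
      simp only [hKt]
      ring
    | Nat.succ n =>
      simp only [Nat.succ_eq_add_one, Nat.add_sub_cancel]
      push_cast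
      simp only [hKt]
      ring
  calc ∑' u : ℕ, ∑' v : ℕ, p u * p v * (htil u - h₀ u) * K (u + 1) (v + 1) * (htil v - h₀ v)
      = ∑' u : ℕ, (p u * (htil u - h₀ u)) * S u := tsum_congr hinner
    _ = ∑' u : ℕ, p u * (htil u * S u + (u:ℝ) * (S u - S (u-1))) := houter
    _ = ∑' u : ℕ, ∑' v : ℕ, p u * p v * κ u v := tsum_congr hfinal
end

section
/- Let m ≥ 1 be an integer and q ∈ [0,1). Then Σ_{y=0}^m C(m,y) q^y (1−q)^{m−y} · y/(m−y+1) = (q/(1−q)) · (1 − q^m). -/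
/-- Binomial first-moment identity behind `ARE^{(1,B)}`:
`E[Y/(m-Y+1)] = (q/(1-q)) (1 - q^m)` for `Y ~ Bin(m,q)`. -/
theorem binomial_expectation_div_succ_complement (m : ℕ) (hm : 1 ≤ m)
    (q : ℝ) (hq0 : 0 ≤ q) (hq1 : q < 1) :
    ∑ y ∈ Finset.range (m + 1),
      (m.choose y : ℝ) * q ^ y * (1 - q) ^ (m - y) * ((y : ℝ) / ((m : ℝ) - y + 1))
      = q / (1 - q) * (1 - q ^ m) := by
  have hq : (1 : ℝ) - q ≠ 0 := by linarith
  -- total mass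
  have hone : ∑ i ∈ Finset.range (m + 1),
      (m.choose i : ℝ) * q ^ i * (1 - q) ^ (m - i) = 1 := by
    have := add_pow q (1 - q) m
    simp only [add_sub_cancel, one_pow] at this
    conv_rhs => rw [this]
    exact Finset.sum_congr rfl fun i _ => by ring
  have hmass : ∑ i ∈ Finset.range m,
      (m.choose i : ℝ) * q ^ i * (1 - q) ^ (m - i) = 1 - q ^ m := by
    have := Finset.sum_range_succ
      (fun i => (m.choose i : ℝ) * q ^ i * (1 - q) ^ (m - i)) m
    rw [this] at hone
    simp at hone
    linarith
  rw [Finset.sum_range_succ' (fun y =>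
      (m.choose y : ℝ) * q ^ y * (1 - q) ^ (m - y) * ((y : ℝ) / ((m : ℝ) - y + 1)))]
  simp only [Nat.cast_zero, zero_div, mul_zero, add_zero]
  rw [← hmass, Finset.mul_sum]
  refine Finset.sum_congr rfl fun i hi => ?_
  have him : i < m := Finset.mem_range.mp hi
  have hsub : m - (i + 1) + 1 = m - i := by omega
  have hcast : (m : ℝ) - (i + 1 : ℕ) + 1 = ((m - i : ℕ) : ℝ) := by
    push_cast [Nat.cast_sub him.le]; ring
  have hne : ((m - i : ℕ) : ℝ) ≠ 0 := by
    have : 0 < m - i := by omega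
    positivity
  have hchoose : (m.choose (i + 1) : ℝ) * (i + 1 : ℕ) = (m.choose i : ℝ) * ((m - i : ℕ)) := by
    exact_mod_cast congrArg (Nat.cast (R := ℝ)) (Nat.choose_succ_right_eq m i)
  have hpow : (1 - q) ^ (m - i) = (1 - q) ^ (m - (i + 1)) * (1 - q) := by
    rw [← pow_succ]; congr 1; omega
  rw [hcast]
  push_cast at hchoose ⊢
  rw [hpow]
  field_simp
  linear_combination (q ^ (i + 1)) * hchoose
end

section
/- Let m ≥ 1 be an integer and q ∈ [0,1). Then Σ_{y=0}^m C(m,y) q^y (1−q)^{m−y} · y(y−1)/((m−y+2)(m−y+1)) = (q/(1−q))² · (1 − m q^{m−1}(1−q) − q^m). -/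
/-- Binomial second-moment identity behind `ARE^{(0,B)}`:
`E[Y(Y-1)/((m-Y+2)(m-Y+1))] = (q/(1-q))² (1 - m q^{m-1}(1-q) - q^m)` for `Y ~ Bin(m,q)`. -/
theorem binomial_expectation_factorial_ratio (m : ℕ) (hm : 1 ≤ m)
    (q : ℝ) (hq0 : 0 ≤ q) (hq1 : q < 1) :
    ∑ y ∈ Finset.range (m + 1),
      (m.choose y : ℝ) * q ^ y * (1 - q) ^ (m - y) *
        ((y : ℝ) * ((y : ℝ) - 1) / ((((m : ℝ) - y + 2)) * ((m : ℝ) - y + 1)))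
      = (q / (1 - q)) ^ 2 * (1 - (m : ℝ) * q ^ (m - 1) * (1 - q) - q ^ m) := by
  obtain ⟨n, rfl⟩ : ∃ n, m = n + 1 := ⟨m - 1, (Nat.succ_pred_eq_of_pos hm).symm⟩
  have hq : (1 : ℝ) - q ≠ 0 := by linarith
  rw [Finset.sum_range_succ', Finset.sum_range_succ']
  have hterm : ∀ k ∈ Finset.range n,
      ((n+1).choose (k+1+1) : ℝ) * q ^ (k+1+1) * (1 - q) ^ (n + 1 - (k+1+1)) *
        (((k+1+1 : ℕ) : ℝ) * (((k+1+1 : ℕ) : ℝ) - 1) /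
          ((((n+1 : ℕ) : ℝ) - ((k+1+1 : ℕ) : ℝ) + 2) * (((n+1 : ℕ) : ℝ) - ((k+1+1 : ℕ) : ℝ) + 1)))
      = (q / (1 - q)) ^ 2 * (((n+1).choose k : ℝ) * q ^ k * (1 - q) ^ (n + 1 - k)) := by
    intro k hk
    rw [Finset.mem_range] at hk
    have h1 : (n+1).choose (k+2) * (k+2) = (n+1).choose (k+1) * (n+1 - (k+1)) :=
      Nat.choose_succ_right_eq (n+1) (k+1)
    have h2 : (n+1).choose (k+1) * (k+1) = (n+1).choose k * (n+1 - k) :=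
      Nat.choose_succ_right_eq (n+1) k
    have e2 : n + 1 - k = (n - 1 - k) + 2 := by omega
    have e3 : n + 1 - (k+1+1) = n - 1 - k := by omega
    have hc1 : ((n+1).choose (k+2) : ℝ) * ((k:ℝ)+2) = ((n+1).choose (k+1) : ℝ) * ((n:ℝ) - k) := by
      have := congrArg (Nat.cast : ℕ → ℝ) h1
      have hkn : k ≤ n := hk.le
      push_cast [show n + 1 - (k+1) = n - k from by omega, Nat.cast_sub hkn] at this
      push_cast
      linarith [this]
    have hc2 : ((n+1).choose (k+1) : ℝ) * ((k:ℝ)+1) = ((n+1).choose k : ℝ) * ((n:ℝ) + 1 - k) := by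
      have := congrArg (Nat.cast : ℕ → ℝ) h2
      have hkn : k ≤ n + 1 := by omega
      push_cast [Nat.cast_sub hkn] at this
      push_cast
      linarith [this]
    have hc3 : ((n+1).choose (k+2) : ℝ) * (((k:ℝ)+2) * ((k:ℝ)+1))
        = ((n+1).choose k : ℝ) * (((n:ℝ) + 1 - k) * ((n:ℝ) - k)) := by
      nlinarith [hc1, hc2]
    have hd1 : ((n:ℝ) - k) ≠ 0 := by
      have : (k:ℝ) < n := by exact_mod_cast hk
      linarith
    have hd2 : ((n:ℝ) + 1 - k) ≠ 0 := by
      have : (k:ℝ) < n := by exact_mod_cast hk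
      linarith
    rw [e2, e3]
    push_cast
    have hsimp : ((n:ℝ) + 1 - (k + 1 + 1) + 2) = (n:ℝ) + 1 - k := by ring
    have hsimp2 : ((n:ℝ) + 1 - (k + 1 + 1) + 1) = (n:ℝ) - k := by ring
    rw [hsimp, hsimp2]
    field_simp
    linear_combination (q ^ (k+2) * (1 - q) ^ (n-1-k) - (2 - q) * q ^ (k+3) * (1 - q) ^ (n-1-k)) * hc3
  rw [Finset.sum_congr rfl hterm]
  rw [← Finset.mul_sum]
  have hbin : ∑ k ∈ Finset.range (n + 2),
      ((n+1).choose k : ℝ) * q ^ k * (1 - q) ^ (n + 1 - k) = 1 := by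
    calc ∑ k ∈ Finset.range (n + 2), ((n+1).choose k : ℝ) * q ^ k * (1 - q) ^ (n + 1 - k)
        = ∑ k ∈ Finset.range (n + 1 + 1), q ^ k * (1 - q) ^ (n + 1 - k) * ((n+1).choose k : ℝ) := by
          apply Finset.sum_congr rfl; intros; ring
      _ = (q + (1 - q)) ^ (n + 1) := (add_pow q (1 - q) (n + 1)).symm
      _ = 1 := by norm_num
  have hsum : ∑ k ∈ Finset.range n, ((n+1).choose k : ℝ) * q ^ k * (1 - q) ^ (n + 1 - k)
      = 1 - ((n:ℝ)+1) * q ^ n * (1 - q) - q ^ (n+1) := by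
    have h := hbin
    rw [Finset.sum_range_succ, Finset.sum_range_succ] at h
    have hcn : ((n+1).choose n : ℝ) = (n:ℝ) + 1 := by
      rw [Nat.choose_succ_self_right]; push_cast; ring
    rw [hcn] at h
    simp only [Nat.choose_self, Nat.cast_one, one_mul, Nat.sub_self, pow_zero, mul_one,
      Nat.add_sub_cancel_left, Nat.succ_sub_one] at h
    rw [pow_one] at h
    linarith [h]
  rw [hsum]
  have e1 : n + 1 - 1 = n := by omega
  rw [e1]
  push_cast
  ring
end

section
/- Let θ : ℕ → (0,∞) be a sequence and suppose there exists ε ∈ (0,1) such that limsup_{n→∞} n^{−1} Σ_{i=1}^n exp(ε θ_i) < ∞. Let (Y_i)_{i≥1} be independent random variables on a common probability space with Y_i ~ Poisson(θ_i) for each i. Then there exists a constant C > 0 (depending on ε) such that P( max_{1≤i≤n} Y_i ≤ C log n ) → 1 as n → ∞. -/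
open MeasureTheory ProbabilityTheory

lemma tsum_pow_div_factorial_eq (x : ℝ) :
    ∑' n : ℕ, x ^ n / (Nat.factorial n : ℝ) = Real.exp x := by
  rw [Real.exp_eq_exp_ℝ, NormedSpace.exp_eq_tsum_div]

lemma poisson_tail_aux {Ω : Type*} [MeasurableSpace Ω] (P : Measure Ω) [IsProbabilityMeasure P]
    (θi ε t : ℝ) (hθ : 0 < θi) (hε : 0 < ε) (ht : 0 ≤ t)
    (Yi : Ω → ℕ)
    (hd : ∀ y : ℕ, P {ω | Yi ω = y}
      = ENNReal.ofReal (Real.exp (-θi) * θi ^ y / (Nat.factorial y : ℝ))) :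
    P {ω | t < (Yi ω : ℝ)} ≤
      ENNReal.ofReal (Real.exp (ε * θi - t * Real.log (1 + ε))) := by
  set c := Real.log (1 + ε) with hc
  have h1ε : (0:ℝ) < 1 + ε := by linarith
  have hc0 : 0 ≤ c := Real.log_nonneg (by linarith)
  set S : ℕ → Set Ω := fun y => if t < (y : ℝ) then {ω | Yi ω = y} else ∅ with hS
  have hsub : {ω | t < (Yi ω : ℝ)} ⊆ ⋃ y, S y := by
    intro ω hω
    refine Set.mem_iUnion.2 ⟨Yi ω, ?_⟩
    have hω' : t < (Yi ω : ℝ) := hω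
    simp only [hS]
    rw [if_pos hω']
    exact Set.mem_setOf.mpr rfl
  set K : ℝ := Real.exp (-θi) * Real.exp (-(t * c)) with hK
  have hK0 : 0 ≤ K := by positivity
  set x : ℝ := (1 + ε) * θi with hx
  have key : ∀ y : ℕ, P (S y) ≤ ENNReal.ofReal (K * (x ^ y / (Nat.factorial y : ℝ))) := by
    intro y
    by_cases h : t < (y : ℝ)
    · simp only [hS, if_pos h]
      rw [hd y]
      apply ENNReal.ofReal_le_ofReal
      have hfac : (0:ℝ) < (Nat.factorial y : ℝ) := by positivity
      have hbase : (0:ℝ) ≤ Real.exp (-θi) * θi ^ y / (Nat.factorial y : ℝ) := by positivity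
      have hexp : (1:ℝ) ≤ Real.exp (-(t * c)) * (1 + ε) ^ y := by
        have hpow : (1 + ε) ^ y = Real.exp ((y : ℝ) * c) := by
          rw [hc, ← Real.exp_log h1ε, ← Real.exp_nat_mul, Real.exp_log h1ε]
        rw [hpow, ← Real.exp_add]
        refine Real.one_le_exp ?_
        nlinarith [h.le, hc0]
      calc Real.exp (-θi) * θi ^ y / (Nat.factorial y : ℝ)
          ≤ (Real.exp (-θi) * θi ^ y / (Nat.factorial y : ℝ))
              * (Real.exp (-(t * c)) * (1 + ε) ^ y) := le_mul_of_one_le_right hbase hexp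
        _ = K * (x ^ y / (Nat.factorial y : ℝ)) := by
            rw [hK, hx, mul_pow]; ring
    · simp only [hS, if_neg h]
      simp
  calc P {ω | t < (Yi ω : ℝ)} ≤ P (⋃ y, S y) := measure_mono hsub
    _ ≤ ∑' y, P (S y) := measure_iUnion_le S
    _ ≤ ∑' y, ENNReal.ofReal (K * (x ^ y / (Nat.factorial y : ℝ))) := ENNReal.tsum_le_tsum key
    _ = ENNReal.ofReal (∑' y : ℕ, K * (x ^ y / (Nat.factorial y : ℝ))) := by
        rw [ENNReal.ofReal_tsum_of_nonneg]
        · intro n; positivity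
        · exact (Real.summable_pow_div_factorial x).mul_left K
    _ = ENNReal.ofReal (Real.exp (ε * θi - t * c)) := by
        rw [tsum_mul_left, tsum_pow_div_factorial_eq, hK, hx,
          ← Real.exp_add, ← Real.exp_add]
        congr 1
        ring

/-- Lemma A of the paper: if `Y_i ~ Poisson(θ_i)` are independent and the rates satisfy
Assumption (A2), `limsup_n n⁻¹ ∑_{i<n} exp(ε θ_i) < ∞` for some `ε ∈ (0,1)`, then there
is a constant `C > 0` with `P(max_{i<n} Y_i ≤ C log n) → 1` as `n → ∞`. -/
theorem poisson_max_le_log_lemmaA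
    {Ω : Type*} [MeasurableSpace Ω] (P : Measure Ω) [IsProbabilityMeasure P]
    (θ : ℕ → ℝ) (hθ : ∀ i, 0 < θ i)
    (ε : ℝ) (hε0 : 0 < ε) (hε1 : ε < 1)
    (hA2 : Filter.atTop.limsup (fun n : ℕ =>
        ENNReal.ofReal ((n : ℝ)⁻¹ * ∑ i ∈ Finset.range n, Real.exp (ε * θ i))) < ⊤)
    (Y : ℕ → Ω → ℕ) (hmeas : ∀ i, Measurable (Y i))
    (hindep : iIndepFun Y P)
    (hdist : ∀ i : ℕ, ∀ y : ℕ, P {ω | Y i ω = y}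
      = ENNReal.ofReal (Real.exp (-θ i) * θ i ^ y / (Nat.factorial y : ℝ))) :
    ∃ C : ℝ, 0 < C ∧ Filter.Tendsto
      (fun n : ℕ => P {ω | ∀ i ∈ Finset.range n, (Y i ω : ℝ) ≤ C * Real.log n})
      Filter.atTop (nhds 1) := by
  set c := Real.log (1 + ε) with hc
  have h1ε : (0:ℝ) < 1 + ε := by linarith
  have hc0 : 0 < c := Real.log_pos (by linarith)
  set C : ℝ := 2 / c with hC
  have hCpos : 0 < C := by positivity
  refine ⟨C, hCpos, ?_⟩
  set B : ℕ → Set Ω :=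
    fun n => ⋃ i ∈ Finset.range n, {ω | C * Real.log n < (Y i ω : ℝ)} with hB
  have hBmeas : ∀ n, MeasurableSet (B n) := by
    intro n
    refine MeasurableSet.biUnion (Finset.range n).countable_toSet (fun i _ => ?_)
    exact measurableSet_lt measurable_const (measurable_from_top.comp (hmeas i))
  have hGB : ∀ n : ℕ,
      {ω | ∀ i ∈ Finset.range n, (Y i ω : ℝ) ≤ C * Real.log n} = (B n)ᶜ := by
    intro n
    ext ω
    simp [hB, not_lt]
  have htn : ∀ n : ℕ, 0 ≤ C * Real.log n :=
    fun n => mul_nonneg hCpos.le (Real.log_natCast_nonneg n)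
  have hbound : ∀ n : ℕ, P (B n) ≤ ∑ i ∈ Finset.range n,
      ENNReal.ofReal (Real.exp (ε * θ i - (C * Real.log n) * c)) := by
    intro n
    refine le_trans (measure_biUnion_finset_le _ _) (Finset.sum_le_sum fun i _ => ?_)
    exact poisson_tail_aux P (θ i) ε (C * Real.log n) (hθ i) hε0 (htn n) (Y i) (hdist i)
  obtain ⟨L, hL1, hL2⟩ := exists_between hA2
  set M := L.toReal with hM
  have hev := Filter.eventually_lt_of_limsup_lt hL1
  obtain ⟨N, hN⟩ := Filter.eventually_atTop.1 (hev.and (Filter.eventually_ge_atTop 1))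
  have hPB : ∀ n ≥ N, P (B n) ≤ ENNReal.ofReal (M / n) := by
    intro n hn
    obtain ⟨h1, h2⟩ := hN n hn
    have hn0 : (0:ℝ) < n := by exact_mod_cast h2
    have hMn : ∑ i ∈ Finset.range n, Real.exp (ε * θ i) ≤ M * n := by
      have hle : (n : ℝ)⁻¹ * ∑ i ∈ Finset.range n, Real.exp (ε * θ i) ≤ M := by
        rw [← ENNReal.ofReal_le_iff_le_toReal hL2.ne] at *
        exact h1.le
      have h' := mul_le_mul_of_nonneg_left hle hn0.le
      rw [← mul_assoc, mul_inv_cancel₀ hn0.ne', one_mul] at h'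
      linarith
    have hCc : (C * Real.log n) * c = 2 * Real.log n := by
      rw [hC]; field_simp
    have hE : Real.exp (2 * Real.log n) = (n:ℝ) ^ 2 := by
      rw [show (2:ℝ) * Real.log n = ((2:ℕ):ℝ) * Real.log n by norm_num,
        Real.exp_nat_mul, Real.exp_log hn0]
    calc P (B n) ≤ ∑ i ∈ Finset.range n,
          ENNReal.ofReal (Real.exp (ε * θ i - (C * Real.log n) * c)) := hbound n
      _ = ENNReal.ofReal (∑ i ∈ Finset.range n,
          Real.exp (ε * θ i - (C * Real.log n) * c)) :=
          (ENNReal.ofReal_sum_of_nonneg (fun i _ => (Real.exp_pos _).le)).symm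
      _ ≤ ENNReal.ofReal (M / n) := by
          apply ENNReal.ofReal_le_ofReal
          have hsplit : ∀ i ∈ Finset.range n, Real.exp (ε * θ i - (C * Real.log n) * c)
              = Real.exp (ε * θ i) * ((n:ℝ) ^ 2)⁻¹ := by
            intro i _
            rw [hCc, Real.exp_sub, hE, div_eq_mul_inv]
          rw [Finset.sum_congr rfl hsplit, ← Finset.sum_mul]
          have h3 : (∑ i ∈ Finset.range n, Real.exp (ε * θ i)) * ((n:ℝ) ^ 2)⁻¹
              ≤ (M * n) * ((n:ℝ) ^ 2)⁻¹ := by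
            apply mul_le_mul_of_nonneg_right hMn
            positivity
          refine h3.trans (le_of_eq ?_)
          field_simp
  have hup : Filter.Tendsto (fun n : ℕ => ENNReal.ofReal (M / n)) Filter.atTop (nhds 0) := by
    have h0 := ENNReal.tendsto_ofReal (tendsto_const_div_atTop_nhds_zero_nat M)
    simpa using h0
  have hPB0 : Filter.Tendsto (fun n => P (B n)) Filter.atTop (nhds 0) :=
    tendsto_of_tendsto_of_tendsto_of_le_of_le' tendsto_const_nhds hup
      (Filter.Eventually.of_forall (fun n => zero_le))
      (Filter.eventually_atTop.2 ⟨N, hPB⟩)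
  have heq : (fun n : ℕ => P {ω | ∀ i ∈ Finset.range n, (Y i ω : ℝ) ≤ C * Real.log n})
      = fun n => 1 - P (B n) := by
    funext n
    rw [hGB n, prob_compl_eq_one_sub (hBmeas n)]
  rw [heq]
  have hsub := ENNReal.Tendsto.sub (tendsto_const_nhds :
      Filter.Tendsto (fun _ : ℕ => (1:ENNReal)) Filter.atTop (nhds 1)) hPB0
      (Or.inl ENNReal.one_ne_top)
  simpa using hsub
end

section
/- Let n ≥ 2 be an integer, let θ_1,...,θ_n ∈ (0,∞) and K > 0 satisfy θ_i ≤ K log n for every i, and let s > 0 and ν > 0 satisfy s² ≥ 2(1+ν)(s+K). If Y_1,...,Y_n are random variables on a common probability space (not necessarily independent) with Y_i ~ Poisson(θ_i) for each i, then P( ∃ i ∈ {1,...,n} : Y_i ≥ θ_i + s log n ) ≤ n^{−ν}. -/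
open MeasureTheory

lemma exp_tsum (x : ℝ) : Real.exp x = ∑' k : ℕ, x ^ k / (Nat.factorial k) := by
  rw [Real.exp_eq_exp_ℝ, NormedSpace.exp_eq_tsum_div]

lemma exp_quad_bound {l : ℝ} (h0 : 0 ≤ l) (h1 : l < 1) :
    Real.exp l ≤ 1 + l + l ^ 2 / (2 * (1 - l)) := by
  have hsum : Summable (fun k : ℕ => l ^ k / (Nat.factorial k)) :=
    Real.summable_pow_div_factorial l
  have hsum2 : Summable (fun k : ℕ => l ^ (k + 2) / (Nat.factorial (k + 2))) :=
    (summable_nat_add_iff 2).2 hsum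
  have hgeom : Summable (fun k : ℕ => l ^ 2 / 2 * l ^ k) :=
    (summable_geometric_of_lt_one h0 h1).mul_left _
  rw [exp_tsum, ← Summable.sum_add_tsum_nat_add 2 hsum]
  have h2 : ∑ k ∈ Finset.range 2, l ^ k / (Nat.factorial k) = 1 + l := by
    simp [Finset.sum_range_succ]
  rw [h2]
  have hpt : ∀ k : ℕ, l ^ (k + 2) / (Nat.factorial (k + 2)) ≤ l ^ 2 / 2 * l ^ k := by
    intro k
    have hfac : (2 : ℝ) ≤ (Nat.factorial (k + 2) : ℝ) := by
      exact_mod_cast Nat.factorial_le (by omega : 2 ≤ k + 2)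
    have hp : (0:ℝ) ≤ l ^ (k + 2) := pow_nonneg h0 _
    have step1 : l ^ (k + 2) / (Nat.factorial (k + 2) : ℝ) ≤ l ^ (k + 2) / 2 := by
      gcongr
    have step2 : l ^ (k + 2) / 2 = l ^ 2 / 2 * l ^ k := by ring
    linarith
  have htail : ∑' k : ℕ, l ^ (k + 2) / (Nat.factorial (k + 2))
      ≤ l ^ 2 / (2 * (1 - l)) := by
    have h3 : ∑' k : ℕ, l ^ 2 / 2 * l ^ k = l ^ 2 / (2 * (1 - l)) := by
      rw [tsum_mul_left, tsum_geometric_of_lt_one h0 h1]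
      have hne : (1 : ℝ) - l ≠ 0 := by linarith
      field_simp
    rw [← h3]
    exact Summable.tsum_le_tsum hpt hsum2 hgeom
  linarith


lemma poisson_tail {Ω : Type*} [MeasurableSpace Ω] (P : Measure Ω)
    (Y : Ω → ℕ) (θ a l : ℝ) (hθ : 0 < θ) (hl : 0 ≤ l)
    (hdist : ∀ y : ℕ, P {ω | Y ω = y}
      = ENNReal.ofReal (Real.exp (-θ) * θ ^ y / (Nat.factorial y : ℝ))) :
    P {ω | a ≤ (Y ω : ℝ)}
      ≤ ENNReal.ofReal (Real.exp (θ * (Real.exp l - 1) - l * a)) := by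
  set q : ℕ → ℝ := fun y => Real.exp (-θ - l * a) * (θ * Real.exp l) ^ y / (Nat.factorial y)
    with hq
  have hqnn : ∀ y, 0 ≤ q y := by
    intro y
    have : (0:ℝ) ≤ (θ * Real.exp l) ^ y := pow_nonneg (by positivity) _
    positivity
  have hqsum : Summable q := by
    have := (Real.summable_pow_div_factorial (θ * Real.exp l)).mul_left
      (Real.exp (-θ - l * a))
    simpa [hq, mul_div_assoc] using this
  have hset : {ω | a ≤ (Y ω : ℝ)} = ⋃ y : ℕ,
      (if a ≤ (y : ℝ) then {ω | Y ω = y} else ∅) := by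
    ext ω
    simp only [Set.mem_setOf_eq, Set.mem_iUnion]
    constructor
    · intro h
      exact ⟨Y ω, by simp [h]⟩
    · rintro ⟨y, hy⟩
      by_cases hc : a ≤ (y : ℝ)
      · simp only [if_pos hc] at hy
        rw [Set.mem_setOf_eq] at hy
        rw [hy]; exact hc
      · simp [if_neg hc] at hy
  calc P {ω | a ≤ (Y ω : ℝ)}
      ≤ ∑' y : ℕ, P (if a ≤ (y : ℝ) then {ω | Y ω = y} else ∅) := by
        rw [hset]; exact measure_iUnion_le _
    _ ≤ ∑' y : ℕ, ENNReal.ofReal (q y) := by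
        apply ENNReal.tsum_le_tsum
        intro y
        by_cases hc : a ≤ (y : ℝ)
        · rw [if_pos hc, hdist y]
          apply ENNReal.ofReal_le_ofReal
          have h1 : (1:ℝ) ≤ Real.exp (l * ((y:ℝ) - a)) := by
            rw [← Real.exp_zero]
            apply Real.exp_le_exp.2
            have := sub_nonneg.2 hc
            positivity
          have hpnn : (0:ℝ) ≤ Real.exp (-θ) * θ ^ y / (Nat.factorial y : ℝ) := by
            positivity
          have hqe : q y = (Real.exp (-θ) * θ ^ y / (Nat.factorial y : ℝ))
              * Real.exp (l * ((y:ℝ) - a)) := by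
            have h2 : Real.exp (-θ - l * a) * Real.exp ((y:ℝ) * l)
                = Real.exp (-θ) * Real.exp (l * ((y:ℝ) - a)) := by
              rw [← Real.exp_add, ← Real.exp_add]
              ring_nf
            rw [hq]
            simp only
            rw [mul_pow, ← Real.exp_nat_mul]
            calc Real.exp (-θ - l * a) * (θ ^ y * Real.exp ((y:ℝ) * l)) / (Nat.factorial y : ℝ)
                = Real.exp (-θ - l * a) * Real.exp ((y:ℝ) * l) * θ ^ y / (Nat.factorial y : ℝ) := by
                  ring
              _ = Real.exp (-θ) * Real.exp (l * ((y:ℝ) - a)) * θ ^ y / (Nat.factorial y : ℝ) := by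
                  rw [h2]
              _ = Real.exp (-θ) * θ ^ y / (Nat.factorial y : ℝ) * Real.exp (l * ((y:ℝ) - a)) := by
                  ring
          rw [hqe]
          nlinarith [hpnn, h1]
        · rw [if_neg hc]
          simp [hqnn y]
    _ = ENNReal.ofReal (∑' y : ℕ, q y) := (ENNReal.ofReal_tsum_of_nonneg hqnn hqsum).symm
    _ = ENNReal.ofReal (Real.exp (θ * (Real.exp l - 1) - l * a)) := by
        congr 1
        have : ∑' y : ℕ, q y = Real.exp (-θ - l * a) * Real.exp (θ * Real.exp l) := by
          rw [hq]
          simp only [mul_div_assoc]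
          rw [tsum_mul_left, exp_tsum (θ * Real.exp l)]
        rw [this, ← Real.exp_add]
        ring_nf

/-- The quantitative finite-sample estimate inside the proof of Lemma A of the paper: if
`Y_i ~ Poisson(θ_i)` (not necessarily independent) with `θ_i ≤ K log n` for `i < n`, and
`s, ν > 0` satisfy `s² ≥ 2(1+ν)(s+K)`, then the probability that some `Y_i` exceeds
`θ_i + s log n` is at most `n^{-ν}`. -/
theorem poisson_max_union_bound
    {Ω : Type*} [MeasurableSpace Ω] (P : Measure Ω) [IsProbabilityMeasure P]
    (n : ℕ) (hn : 2 ≤ n)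
    (θ : ℕ → ℝ) (K : ℝ) (hK : 0 < K)
    (hθpos : ∀ i ∈ Finset.range n, 0 < θ i)
    (hθle : ∀ i ∈ Finset.range n, θ i ≤ K * Real.log n)
    (s ν : ℝ) (hs : 0 < s) (hν : 0 < ν) (hsν : 2 * (1 + ν) * (s + K) ≤ s ^ 2)
    (Y : ℕ → Ω → ℕ) (hmeas : ∀ i, Measurable (Y i))
    (hdist : ∀ i ∈ Finset.range n, ∀ y : ℕ, P {ω | Y i ω = y}
      = ENNReal.ofReal (Real.exp (-θ i) * θ i ^ y / (Nat.factorial y : ℝ))) :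
    P {ω | ∃ i ∈ Finset.range n, θ i + s * Real.log n ≤ (Y i ω : ℝ)}
      ≤ ENNReal.ofReal ((n : ℝ) ^ (-ν)) := by
  have hn1 : (1:ℝ) < n := by exact_mod_cast Nat.lt_of_lt_of_le one_lt_two hn
  have hn0 : (0:ℝ) < n := by linarith
  set L := Real.log n with hLdef
  have hL : 0 < L := Real.log_pos hn1
  have hsK : 0 < s + K := by linarith
  set l := s / (s + K) with hldef
  have hl0 : 0 ≤ l := by positivity
  have hl1 : l < 1 := by
    rw [hldef, div_lt_one hsK]; linarith
  -- exponent bound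
  have hexp : ∀ i ∈ Finset.range n,
      θ i * (Real.exp l - 1) - l * (θ i + s * L) ≤ -(1 + ν) * L := by
    intro i hi
    have he0 : 0 ≤ Real.exp l - 1 - l := by
      have := Real.add_one_le_exp l; linarith
    have he1 : Real.exp l - 1 - l ≤ l ^ 2 / (2 * (1 - l)) := by
      have := exp_quad_bound hl0 hl1; linarith
    have hKe : K * (l ^ 2 / (2 * (1 - l))) = s ^ 2 / (2 * (s + K)) := by
      rw [hldef]
      have h1 : (1:ℝ) - s / (s + K) = K / (s + K) := by
        field_simp
        ring
      rw [h1]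
      field_simp
    have hls : l * s = s ^ 2 / (s + K) := by
      rw [hldef]; field_simp
    have hnu : (1 + ν) ≤ s ^ 2 / (2 * (s + K)) := by
      rw [le_div_iff₀ (by positivity)]; linarith
    have hcore : K * (Real.exp l - 1 - l) - l * s ≤ -(1 + ν) := by
      have : K * (Real.exp l - 1 - l) ≤ s ^ 2 / (2 * (s + K)) := by
        calc K * (Real.exp l - 1 - l) ≤ K * (l ^ 2 / (2 * (1 - l))) := by
              apply mul_le_mul_of_nonneg_left he1 (le_of_lt hK)
          _ = s ^ 2 / (2 * (s + K)) := hKe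
      have h2 : s ^ 2 / (2 * (s + K)) - s ^ 2 / (s + K) = -(s ^ 2 / (2 * (s + K))) := by
        field_simp; ring
      have h3 : (1 + ν) ≤ s ^ 2 / (2 * (s + K)) := hnu
      rw [hls]
      linarith
    have hθi : θ i ≤ K * L := hθle i hi
    have key : θ i * (Real.exp l - 1 - l) ≤ K * L * (Real.exp l - 1 - l) :=
      mul_le_mul_of_nonneg_right hθi he0
    have expand : θ i * (Real.exp l - 1) - l * (θ i + s * L)
        = θ i * (Real.exp l - 1 - l) - l * s * L := by ring
    rw [expand]
    have : K * L * (Real.exp l - 1 - l) - l * s * L = (K * (Real.exp l - 1 - l) - l * s) * L := by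
      ring
    nlinarith [mul_le_mul_of_nonneg_right hcore (le_of_lt hL)]
  -- per index bound
  have hPi : ∀ i ∈ Finset.range n,
      P {ω | θ i + s * L ≤ (Y i ω : ℝ)} ≤ ENNReal.ofReal (Real.exp (-(1 + ν) * L)) := by
    intro i hi
    calc P {ω | θ i + s * L ≤ (Y i ω : ℝ)}
        ≤ ENNReal.ofReal (Real.exp (θ i * (Real.exp l - 1) - l * (θ i + s * L))) :=
          poisson_tail P (Y i) (θ i) (θ i + s * L) l (hθpos i hi) hl0 (hdist i hi)
      _ ≤ ENNReal.ofReal (Real.exp (-(1 + ν) * L)) := by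
          exact ENNReal.ofReal_le_ofReal (Real.exp_le_exp.2 (hexp i hi))
  -- union bound
  have hset : {ω | ∃ i ∈ Finset.range n, θ i + s * L ≤ ((Y i ω : ℕ) : ℝ)}
      = ⋃ i ∈ Finset.range n, {ω | θ i + s * L ≤ ((Y i ω : ℕ) : ℝ)} := by
    ext ω; simp
  calc P {ω | ∃ i ∈ Finset.range n, θ i + s * L ≤ ((Y i ω : ℕ) : ℝ)}
      ≤ ∑ i ∈ Finset.range n, P {ω | θ i + s * L ≤ ((Y i ω : ℕ) : ℝ)} := by
        rw [hset]; exact measure_biUnion_finset_le _ _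
    _ ≤ ∑ i ∈ Finset.range n, ENNReal.ofReal (Real.exp (-(1 + ν) * L)) :=
        Finset.sum_le_sum hPi
    _ = (n : ENNReal) * ENNReal.ofReal (Real.exp (-(1 + ν) * L)) := by
        rw [Finset.sum_const, Finset.card_range, nsmul_eq_mul]
    _ = ENNReal.ofReal ((n : ℝ) * Real.exp (-(1 + ν) * L)) := by
        rw [ENNReal.ofReal_mul (le_of_lt hn0), ENNReal.ofReal_natCast]
    _ = ENNReal.ofReal ((n : ℝ) ^ (-ν)) := by
        congr 1
        rw [Real.rpow_def_of_pos hn0, ← hLdef]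
        calc (n:ℝ) * Real.exp (-(1 + ν) * L)
            = Real.exp L * Real.exp (-(1 + ν) * L) := by rw [Real.exp_log hn0]
          _ = Real.exp (L + -(1 + ν) * L) := (Real.exp_add _ _).symm
          _ = Real.exp (L * -ν) := by congr 1; ring
end

section
/- Let X be a real normed vector space, S ⊆ X a set, f, g : X → ℝ functions, and c > 0, L ≥ 0 constants. Suppose (i) x₀ ∈ S satisfies f(x) − f(x₀) ≥ c·‖x − x₀‖² for all x ∈ S (quadratic growth of f at x₀ over S); (ii) x₁ ∈ S satisfies g(x₁) ≤ g(x₀); and (iii) the difference f − g is Lipschitz on S with constant L, i.e. |(f(u) − g(u)) − (f(v) − g(v))| ≤ L·‖u − v‖ for all u, v ∈ S. Then ‖x₁ − x₀‖ ≤ L/c. -/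
/-- Abstract stability principle (Lemma B of the paper): quadratic growth of `f` at the
minimizer `x₀` over `S`, near-optimality of `x₁` for `g`, and Lipschitz continuity of the
difference `f - g` on `S` force `x₁` to be within `L / c` of `x₀`. -/
theorem quadratic_growth_lipschitz_stability
    {X : Type*} [NormedAddCommGroup X] [NormedSpace ℝ X]
    (S : Set X) (f g : X → ℝ) (c L : ℝ) (hc : 0 < c) (hL : 0 ≤ L)
    (x₀ x₁ : X) (hx₀ : x₀ ∈ S) (hx₁ : x₁ ∈ S)
    (hgrow : ∀ x ∈ S, c * ‖x - x₀‖ ^ 2 ≤ f x - f x₀)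
    (hmin : g x₁ ≤ g x₀)
    (hlip : ∀ u ∈ S, ∀ v ∈ S, |(f u - g u) - (f v - g v)| ≤ L * ‖u - v‖) :
    ‖x₁ - x₀‖ ≤ L / c := by
  set r := ‖x₁ - x₀‖ with hr
  have hr0 : 0 ≤ r := norm_nonneg _
  have h1 : c * r ^ 2 ≤ f x₁ - f x₀ := hgrow _ hx₁
  have h2 : (f x₁ - g x₁) - (f x₀ - g x₀) ≤ L * r :=
    le_trans (le_abs_self _) (hlip _ hx₁ _ hx₀)
  have key : c * r ^ 2 ≤ L * r := by nlinarith
  rcases eq_or_lt_of_le hr0 with h | h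
  · rw [← h]; positivity
  · rw [le_div_iff₀ hc]; nlinarith
end
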